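/- Constant-witness existence (part ii): For any instance (G = (V, E, α), k) of Broadcast Improvement with optimum broadcast β*, there exists a set S ⊆ V² ∖ E of size at most C(2k, 2) = 2k(2k−1)/2 such that for every pair of vertices u, v ∈ V there exists a subset W_{uv} ⊆ S of size at most 2 with prox_{G + W_{uv}}(u, v) ≥ β*α / (12k² + 3); that is, S is a (2, β*α/(12k² + 3))-witnessing solution of size at most C(2k, 2). -/

import Mathlib

open scoped Classical

variable {V : Type*} [Fintype V] [DecidableEq V]

/-- The proximity of `u` and `v` in the information graph `(V, E, α)`: the probability
that `u` and `v` are connected in a graph obtained by retaining each edge of `E`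
independently with probability `α`. -/
noncomputable def prox (E : Finset (Sym2 V)) (α : ℝ) (u v : V) : ℝ :=
  ∑ F ∈ E.powerset,
    if (SimpleGraph.fromEdgeSet (F : Set (Sym2 V))).Reachable u v then
      α ^ F.card * (1 - α) ^ (E \ F).card
    else 0

/-- The broadcast of an information graph: the minimum proximity over pairs of distinct
vertices. -/
noncomputable def broadcast (E : Finset (Sym2 V)) (α : ℝ) : ℝ :=
  ⨅ p : {p : V × V // p.1 ≠ p.2}, prox E α p.1.1 p.1.2

/-- The optimum broadcast achievable by adding at most `k` vertex pairs disjoint from `E`. -/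
noncomputable def optBroadcast (E : Finset (Sym2 V)) (α : ℝ) (k : ℕ) : ℝ :=
  ⨆ F : {F : Finset (Sym2 V) // F.card ≤ k ∧ ∀ e ∈ F, e ∉ E}, broadcast (E ∪ F.1) α

/-- The reach of a vertex `v`: the minimum proximity of `v` to any other vertex. -/
noncomputable def reach (E : Finset (Sym2 V)) (α : ℝ) (v : V) : ℝ :=
  ⨅ u : {u : V // u ≠ v}, prox E α v u.1

/-- The optimum reach of a source vertex `vs` achievable by adding at most `k`
vertex pairs disjoint from `E`. -/
noncomputable def optReach (E : Finset (Sym2 V)) (α : ℝ) (k : ℕ) (vs : V) : ℝ :=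
  ⨆ F : {F : Finset (Sym2 V) // F.card ≤ k ∧ ∀ e ∈ F, e ∉ E}, reach (E ∪ F.1) α vs

/-- The probability that, in a sampled graph, all edges of at least one member of the
family `P` of edge-lists are retained. -/
noncomputable def prPaths (E : Finset (Sym2 V)) (α : ℝ) (P : Set (List (Sym2 V))) : ℝ :=
  ∑ F ∈ E.powerset,
    if ∃ p ∈ P, ∀ e ∈ p, e ∈ F then α ^ F.card * (1 - α) ^ (E \ F).card
    else 0

set_option linter.unusedSectionVars false

open SimpleGraph Finset

/-- real-valued indicator of a proposition -/
noncomputable def ind (P : Prop) : ℝ := if P then 1 else 0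

lemma ind_nonneg (P : Prop) : 0 ≤ ind P := by
  rw [ind]; split_ifs; exacts [zero_le_one, le_refl 0]

lemma ind_le_one (P : Prop) : ind P ≤ 1 := by
  rw [ind]; split_ifs; exacts [le_refl 1, zero_le_one]

lemma ind_of {P : Prop} (h : P) : ind P = 1 := if_pos h

lemma ind_of_not {P : Prop} (h : ¬ P) : ind P = 0 := if_neg h

lemma ind_mono {P Q : Prop} (h : P → Q) : ind P ≤ ind Q := by
  by_cases hP : P
  · rw [ind_of hP, ind_of (h hP)]
  · rw [ind_of_not hP]; exact ind_nonneg Q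

lemma ite_eq_ind_mul {P : Prop} [Decidable P] (c : ℝ) : (if P then c else 0) = ind P * c := by
  by_cases h : P
  · rw [if_pos h, ind_of h, one_mul]
  · rw [if_neg h, ind_of_not h, zero_mul]

noncomputable def wt (E : Finset (Sym2 V)) (α : ℝ) (F : Finset (Sym2 V)) : ℝ :=
  α ^ F.card * (1 - α) ^ (E \ F).card

lemma wt_nonneg {α : ℝ} (hα0 : 0 ≤ α) (hα1 : α ≤ 1) (E F : Finset (Sym2 V)) :
    0 ≤ wt E α F :=
  mul_nonneg (pow_nonneg hα0 _) (pow_nonneg (by linarith) _)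

lemma sum_wt (E : Finset (Sym2 V)) (α : ℝ) : ∑ F ∈ E.powerset, wt E α F = 1 := by
  have h := Finset.prod_add (fun _ : Sym2 V => α) (fun _ : Sym2 V => (1 - α)) E
  simp only [Finset.prod_const, add_sub_cancel, one_pow] at h
  simpa [wt] using h.symm

lemma wt_insert_not {α : ℝ} {a : Sym2 V} {E t : Finset (Sym2 V)} (ha : a ∉ E) (ht : t ⊆ E) :
    wt (insert a E) α t = (1 - α) * wt E α t := by
  have hat : a ∉ t := fun h => ha (ht h)
  have h1 : insert a E \ t = insert a (E \ t) := by
    ext x; simp only [Finset.mem_sdiff, Finset.mem_insert]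
    constructor
    · rintro ⟨h | h, h2⟩ <;> tauto
    · rintro (rfl | ⟨h1, h2⟩) <;> tauto
  have h2 : a ∉ E \ t := fun h => ha (Finset.mem_sdiff.1 h).1
  rw [wt, wt, h1, Finset.card_insert_of_notMem h2, pow_succ]
  ring

lemma wt_insert_self {α : ℝ} {a : Sym2 V} {E t : Finset (Sym2 V)} (ha : a ∉ E) (ht : t ⊆ E) :
    wt (insert a E) α (insert a t) = α * wt E α t := by
  have hat : a ∉ t := fun h => ha (ht h)
  have h1 : insert a E \ insert a t = E \ t := by
    ext x; simp only [Finset.mem_sdiff, Finset.mem_insert]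
    constructor
    · rintro ⟨h | h, h2⟩
      · exact absurd (Or.inl h) h2
      · exact ⟨h, fun h' => h2 (Or.inr h')⟩
    · rintro ⟨h1', h2⟩
      refine ⟨Or.inr h1', ?_⟩
      rintro (rfl | h) <;> [exact ha h1'; exact h2 h]
  rw [wt, wt, h1, Finset.card_insert_of_notMem hat, pow_succ]
  ring

lemma marg (α : ℝ) (E : Finset (Sym2 V)) (P : Finset (Sym2 V) → Prop)
    (D : Finset (Sym2 V)) (hD : Disjoint D E) :
    ∑ F ∈ (E ∪ D).powerset, ind (P (F ∩ E)) * wt (E ∪ D) α F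
      = ∑ G ∈ E.powerset, ind (P G) * wt E α G := by
  induction D using Finset.induction_on with
  | empty =>
    rw [Finset.union_empty]
    exact Finset.sum_congr rfl fun t ht => by
      rw [Finset.inter_eq_left.2 (Finset.mem_powerset.1 ht)]
  | @insert a D' ha ih =>
    rw [Finset.disjoint_insert_left] at hD
    obtain ⟨haE, hD'⟩ := hD
    have haU : a ∉ E ∪ D' := by simp [haE, ha]
    rw [Finset.union_insert, Finset.sum_powerset_insert haU, ← ih hD', ← Finset.sum_add_distrib]
    apply Finset.sum_congr rfl
    intro t ht
    rw [Finset.mem_powerset] at ht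
    rw [Finset.insert_inter_of_notMem haE, wt_insert_not haU ht, wt_insert_self haU ht]
    ring

lemma reach_mono {s t : Finset (Sym2 V)} (h : s ⊆ t) {a b : V}
    (hr : (SimpleGraph.fromEdgeSet (s : Set (Sym2 V))).Reachable a b) :
    (SimpleGraph.fromEdgeSet (t : Set (Sym2 V))).Reachable a b :=
  hr.mono (SimpleGraph.fromEdgeSet_mono (by exact_mod_cast h))

lemma walk_decomp (E F : Finset (Sym2 V)) {u v : V}
    (p : (SimpleGraph.fromEdgeSet (F : Set (Sym2 V))).Walk u v) :
    (SimpleGraph.fromEdgeSet ((F ∩ E : Finset (Sym2 V)) : Set (Sym2 V))).Reachable u v ∨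
      ∃ x, (∃ e ∈ F, e ∉ E ∧ x ∈ e) ∧
        (SimpleGraph.fromEdgeSet ((F ∩ E : Finset (Sym2 V)) : Set (Sym2 V))).Reachable u x := by
  induction p with
  | nil => exact Or.inl (SimpleGraph.Reachable.refl _)
  | @cons a b c h p ih =>
    rw [SimpleGraph.fromEdgeSet_adj] at h
    by_cases he : s(a, b) ∈ E
    · have hadj : (SimpleGraph.fromEdgeSet ((F ∩ E : Finset (Sym2 V)) : Set (Sym2 V))).Adj a b := by
        rw [SimpleGraph.fromEdgeSet_adj]
        exact ⟨by simp only [Finset.mem_coe, Finset.mem_inter]; exact ⟨by exact_mod_cast h.1, he⟩, h.2⟩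
      rcases ih with h1 | ⟨x, hx, h2⟩
      · exact Or.inl (hadj.reachable.trans h1)
      · exact Or.inr ⟨x, hx, hadj.reachable.trans h2⟩
    · exact Or.inr ⟨a, ⟨s(a, b), by exact_mod_cast h.1, he, Sym2.mem_mk_left _ _⟩,
        SimpleGraph.Reachable.refl _⟩

lemma reach_decomp {E F : Finset (Sym2 V)} {u v : V}
    (h : (SimpleGraph.fromEdgeSet (F : Set (Sym2 V))).Reachable u v) :
    (SimpleGraph.fromEdgeSet ((F ∩ E : Finset (Sym2 V)) : Set (Sym2 V))).Reachable u v ∨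
      ∃ x y, (∃ e ∈ F, e ∉ E ∧ x ∈ e) ∧ (∃ e ∈ F, e ∉ E ∧ y ∈ e) ∧
        (SimpleGraph.fromEdgeSet ((F ∩ E : Finset (Sym2 V)) : Set (Sym2 V))).Reachable u x ∧
        (SimpleGraph.fromEdgeSet ((F ∩ E : Finset (Sym2 V)) : Set (Sym2 V))).Reachable y v := by
  obtain ⟨p⟩ := h
  rcases walk_decomp E F p with h1 | ⟨x, hx, hux⟩
  · exact Or.inl h1
  rcases walk_decomp E F p.reverse with h1 | ⟨y, hy, hvy⟩
  · exact Or.inl h1.symm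
  exact Or.inr ⟨x, y, hx, hy, hux, hvy.symm⟩

noncomputable def q (E : Finset (Sym2 V)) (α : ℝ) (u v x y : V) : ℝ :=
  ∑ G ∈ E.powerset,
    ind ((SimpleGraph.fromEdgeSet (G : Set (Sym2 V))).Reachable u x ∧
      (SimpleGraph.fromEdgeSet (G : Set (Sym2 V))).Reachable y v) * wt E α G

lemma prox_eq (E : Finset (Sym2 V)) (α : ℝ) (u v : V) :
    prox E α u v = ∑ F ∈ E.powerset,
      ind ((SimpleGraph.fromEdgeSet (F : Set (Sym2 V))).Reachable u v) * wt E α F :=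
  Finset.sum_congr rfl fun F _ => ite_eq_ind_mul _

lemma prox_nonneg {α : ℝ} (hα0 : 0 ≤ α) (hα1 : α ≤ 1) (E : Finset (Sym2 V)) (u v : V) :
    0 ≤ prox E α u v := by
  rw [prox_eq]
  exact Finset.sum_nonneg fun F _ => mul_nonneg (ind_nonneg _) (wt_nonneg hα0 hα1 _ _)

lemma prox_le_one {α : ℝ} (hα0 : 0 ≤ α) (hα1 : α ≤ 1) (E : Finset (Sym2 V)) (u v : V) :
    prox E α u v ≤ 1 := by
  rw [prox_eq, ← sum_wt E α]
  refine Finset.sum_le_sum fun F _ => ?_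
  have hw := wt_nonneg hα0 hα1 E F
  nlinarith [ind_nonneg ((SimpleGraph.fromEdgeSet (F : Set (Sym2 V))).Reachable u v),
    ind_le_one ((SimpleGraph.fromEdgeSet (F : Set (Sym2 V))).Reachable u v)]

lemma prox_self (E : Finset (Sym2 V)) (α : ℝ) (u : V) : prox E α u u = 1 := by
  rw [prox_eq, ← sum_wt E α]
  exact Finset.sum_congr rfl fun F _ => by
    rw [ind_of (SimpleGraph.Reachable.refl _), one_mul]

lemma q_nonneg {α : ℝ} (hα0 : 0 ≤ α) (hα1 : α ≤ 1) (E : Finset (Sym2 V)) (u v x y : V) :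
    0 ≤ q E α u v x y :=
  Finset.sum_nonneg fun F _ => mul_nonneg (ind_nonneg _) (wt_nonneg hα0 hα1 _ _)

lemma case_eq {α : ℝ} (hα0 : 0 ≤ α) (hα1 : α ≤ 1) (E : Finset (Sym2 V)) (u v x : V) :
    q E α u v x x ≤ prox E α u v := by
  rw [prox_eq, q]
  refine Finset.sum_le_sum fun F _ => ?_
  exact mul_le_mul_of_nonneg_right (ind_mono fun h => h.1.trans h.2) (wt_nonneg hα0 hα1 _ _)

lemma case_out {α : ℝ} (hα0 : 0 ≤ α) (hα1 : α ≤ 1) (E : Finset (Sym2 V)) {x y : V}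
    (hxy : x ≠ y) (he : s(x, y) ∉ E) (u v : V) :
    α * q E α u v x y ≤ prox (insert s(x, y) E) α u v := by
  set e := s(x, y) with hedef
  rw [prox_eq, Finset.sum_powerset_insert he, q, Finset.mul_sum]
  have h1 : (0:ℝ) ≤ ∑ t ∈ E.powerset,
      ind ((SimpleGraph.fromEdgeSet (t : Set (Sym2 V))).Reachable u v) * wt (insert e E) α t :=
    Finset.sum_nonneg fun F _ => mul_nonneg (ind_nonneg _) (wt_nonneg hα0 hα1 _ _)
  refine le_add_of_nonneg_of_le h1 (Finset.sum_le_sum fun t ht => ?_)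
  rw [Finset.mem_powerset] at ht
  rw [wt_insert_self he ht]
  have hmono : ((SimpleGraph.fromEdgeSet (t : Set (Sym2 V))).Reachable u x ∧
      (SimpleGraph.fromEdgeSet (t : Set (Sym2 V))).Reachable y v) →
      (SimpleGraph.fromEdgeSet ((insert e t : Finset (Sym2 V)) : Set (Sym2 V))).Reachable u v := by
    intro hB
    have hsub : t ⊆ insert e t := Finset.subset_insert _ _
    have hadj : (SimpleGraph.fromEdgeSet ((insert e t : Finset (Sym2 V)) : Set (Sym2 V))).Adj x y := by
      rw [SimpleGraph.fromEdgeSet_adj]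
      exact ⟨by simp [hedef], hxy⟩
    exact ((reach_mono hsub hB.1).trans hadj.reachable).trans (reach_mono hsub hB.2)
  have := mul_le_mul_of_nonneg_right (ind_mono hmono)
    (mul_nonneg hα0 (wt_nonneg hα0 hα1 E t))
  nlinarith [this]

lemma case_in {α : ℝ} (hα0 : 0 ≤ α) (hα1 : α ≤ 1) {E : Finset (Sym2 V)} {x y : V}
    (hxy : x ≠ y) (he : s(x, y) ∈ E) (u v : V) :
    α * q E α u v x y ≤ prox E α u v := by
  set e := s(x, y) with hedef
  obtain ⟨E', he', rfl⟩ : ∃ E', e ∉ E' ∧ E = insert e E' :=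
    ⟨E.erase e, Finset.notMem_erase _ _, (Finset.insert_erase he).symm⟩
  rw [prox_eq, q, Finset.sum_powerset_insert he', Finset.sum_powerset_insert he',
    mul_add, Finset.mul_sum, Finset.mul_sum, ← Finset.sum_add_distrib, ← Finset.sum_add_distrib]
  refine Finset.sum_le_sum fun t ht => ?_
  rw [Finset.mem_powerset] at ht
  rw [wt_insert_self he' ht, wt_insert_not he' ht]
  have hw : 0 ≤ wt E' α t := wt_nonneg hα0 hα1 _ _
  have hsub : t ⊆ insert e t := Finset.subset_insert _ _
  have hadj : (SimpleGraph.fromEdgeSet ((insert e t : Finset (Sym2 V)) : Set (Sym2 V))).Adj x y := by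
    rw [SimpleGraph.fromEdgeSet_adj]; exact ⟨by simp [hedef], hxy⟩
  set Bt := ((SimpleGraph.fromEdgeSet (t : Set (Sym2 V))).Reachable u x ∧
      (SimpleGraph.fromEdgeSet (t : Set (Sym2 V))).Reachable y v)
  set Bi := ((SimpleGraph.fromEdgeSet ((insert e t : Finset (Sym2 V)) : Set (Sym2 V))).Reachable u x ∧
      (SimpleGraph.fromEdgeSet ((insert e t : Finset (Sym2 V)) : Set (Sym2 V))).Reachable y v)
  set Rt := (SimpleGraph.fromEdgeSet (t : Set (Sym2 V))).Reachable u v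
  set Ri := (SimpleGraph.fromEdgeSet ((insert e t : Finset (Sym2 V)) : Set (Sym2 V))).Reachable u v
  have hBtBi : ind Bt ≤ ind Bi := ind_mono fun h => ⟨reach_mono hsub h.1, reach_mono hsub h.2⟩
  have hBiRi : ind Bi ≤ ind Ri := ind_mono fun h => (h.1.trans hadj.reachable).trans h.2
  have h1 := ind_nonneg Rt
  have h2 := ind_le_one Bi
  have h3 := ind_nonneg Bi
  -- goal: α * (ind Bt * ((1-α) * w)) + α * (ind Bi * (α * w)) ≤ ind Rt * ((1-α)*w) + ind Ri * (α*w)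
  have hα1' : (0:ℝ) ≤ 1 - α := by linarith
  nlinarith [mul_nonneg (mul_nonneg (mul_nonneg (sub_nonneg.2 hBtBi) hα1') hα0) hw,
    mul_nonneg (mul_nonneg (sub_nonneg.2 hBiRi) hα0) hw,
    mul_nonneg (mul_nonneg h1 hα1') hw]

lemma decomp {α : ℝ} (hα0 : 0 ≤ α) (hα1 : α ≤ 1) (E D : Finset (Sym2 V))
    (hD : Disjoint D E) (T : Finset V) (hT : ∀ e ∈ D, ∀ x, x ∈ e → x ∈ T) (u v : V) :
    prox (E ∪ D) α u v ≤ prox E α u v + ∑ x ∈ T, ∑ y ∈ T, q E α u v x y := by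
  have hmarg1 : prox E α u v
      = ∑ F ∈ (E ∪ D).powerset,
        ind ((SimpleGraph.fromEdgeSet ((F ∩ E : Finset (Sym2 V)) : Set (Sym2 V))).Reachable u v)
          * wt (E ∪ D) α F := by
    rw [prox_eq]
    exact (marg α E
      (fun G => (SimpleGraph.fromEdgeSet (G : Set (Sym2 V))).Reachable u v) D hD).symm
  have hmarg2 : ∀ x y : V, q E α u v x y
      = ∑ F ∈ (E ∪ D).powerset,
        ind ((SimpleGraph.fromEdgeSet ((F ∩ E : Finset (Sym2 V)) : Set (Sym2 V))).Reachable u x ∧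
          (SimpleGraph.fromEdgeSet ((F ∩ E : Finset (Sym2 V)) : Set (Sym2 V))).Reachable y v)
          * wt (E ∪ D) α F := by
    intro x y
    rw [q]
    exact (marg α E
      (fun G => (SimpleGraph.fromEdgeSet (G : Set (Sym2 V))).Reachable u x ∧
        (SimpleGraph.fromEdgeSet (G : Set (Sym2 V))).Reachable y v) D hD).symm
  have hswap : ∑ x ∈ T, ∑ y ∈ T, q E α u v x y
      = ∑ F ∈ (E ∪ D).powerset, (∑ x ∈ T, ∑ y ∈ T,
        ind ((SimpleGraph.fromEdgeSet ((F ∩ E : Finset (Sym2 V)) : Set (Sym2 V))).Reachable u x ∧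
          (SimpleGraph.fromEdgeSet ((F ∩ E : Finset (Sym2 V)) : Set (Sym2 V))).Reachable y v))
          * wt (E ∪ D) α F := by
    calc ∑ x ∈ T, ∑ y ∈ T, q E α u v x y
        = ∑ x ∈ T, ∑ y ∈ T, ∑ F ∈ (E ∪ D).powerset,
          ind ((SimpleGraph.fromEdgeSet ((F ∩ E : Finset (Sym2 V)) : Set (Sym2 V))).Reachable u x ∧
            (SimpleGraph.fromEdgeSet ((F ∩ E : Finset (Sym2 V)) : Set (Sym2 V))).Reachable y v)
            * wt (E ∪ D) α F :=
          Finset.sum_congr rfl fun x _ => Finset.sum_congr rfl fun y _ => hmarg2 x y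
      _ = ∑ F ∈ (E ∪ D).powerset, ∑ x ∈ T, ∑ y ∈ T,
          ind ((SimpleGraph.fromEdgeSet ((F ∩ E : Finset (Sym2 V)) : Set (Sym2 V))).Reachable u x ∧
            (SimpleGraph.fromEdgeSet ((F ∩ E : Finset (Sym2 V)) : Set (Sym2 V))).Reachable y v)
            * wt (E ∪ D) α F :=
          Eq.trans (Finset.sum_congr rfl fun x _ => Finset.sum_comm) Finset.sum_comm
      _ = ∑ F ∈ (E ∪ D).powerset, (∑ x ∈ T, ∑ y ∈ T,
          ind ((SimpleGraph.fromEdgeSet ((F ∩ E : Finset (Sym2 V)) : Set (Sym2 V))).Reachable u x ∧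
            (SimpleGraph.fromEdgeSet ((F ∩ E : Finset (Sym2 V)) : Set (Sym2 V))).Reachable y v))
            * wt (E ∪ D) α F := by
          refine Finset.sum_congr rfl fun F _ => ?_
          rw [Finset.sum_mul]
          exact Finset.sum_congr rfl fun x _ => (Finset.sum_mul _ _ _).symm
  rw [hmarg1, hswap, prox_eq, ← Finset.sum_add_distrib]
  refine Finset.sum_le_sum fun F hF => ?_
  rw [Finset.mem_powerset] at hF
  have hw : 0 ≤ wt (E ∪ D) α F := wt_nonneg hα0 hα1 _ _
  rw [← add_mul]
  refine mul_le_mul_of_nonneg_right ?_ hw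
  by_cases hR : (SimpleGraph.fromEdgeSet (F : Set (Sym2 V))).Reachable u v
  · rw [ind_of hR]
    rcases reach_decomp (E := E) hR with h1 | ⟨x, y, hx, hy, hux, hyv⟩
    · rw [ind_of h1]
      have : (0:ℝ) ≤ ∑ x ∈ T, ∑ y ∈ T,
          ind ((SimpleGraph.fromEdgeSet ((F ∩ E : Finset (Sym2 V)) : Set (Sym2 V))).Reachable u x ∧
            (SimpleGraph.fromEdgeSet ((F ∩ E : Finset (Sym2 V)) : Set (Sym2 V))).Reachable y v) :=
        Finset.sum_nonneg fun _ _ => Finset.sum_nonneg fun _ _ => ind_nonneg _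
      linarith
    · obtain ⟨ex, hexF, hexE, hxex⟩ := hx
      obtain ⟨ey, heyF, heyE, hyey⟩ := hy
      have hxT : x ∈ T := hT ex (by
        rcases Finset.mem_union.1 (hF hexF) with h | h
        · exact absurd h hexE
        · exact h) x hxex
      have hyT : y ∈ T := hT ey (by
        rcases Finset.mem_union.1 (hF heyF) with h | h
        · exact absurd h heyE
        · exact h) y hyey
      have hinner : (1:ℝ) ≤ ∑ y' ∈ T,
          ind ((SimpleGraph.fromEdgeSet ((F ∩ E : Finset (Sym2 V)) : Set (Sym2 V))).Reachable u x ∧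
            (SimpleGraph.fromEdgeSet ((F ∩ E : Finset (Sym2 V)) : Set (Sym2 V))).Reachable y' v) := by
        have hP : ind ((SimpleGraph.fromEdgeSet ((F ∩ E : Finset (Sym2 V)) : Set (Sym2 V))).Reachable u x ∧
            (SimpleGraph.fromEdgeSet ((F ∩ E : Finset (Sym2 V)) : Set (Sym2 V))).Reachable y v) = 1 :=
          ind_of ⟨hux, hyv⟩
        refine le_trans (le_of_eq hP.symm) ?_
        exact Finset.single_le_sum (f := fun y' =>
          ind ((SimpleGraph.fromEdgeSet ((F ∩ E : Finset (Sym2 V)) : Set (Sym2 V))).Reachable u x ∧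
            (SimpleGraph.fromEdgeSet ((F ∩ E : Finset (Sym2 V)) : Set (Sym2 V))).Reachable y' v))
          (fun _ _ => ind_nonneg _) hyT
      have houter : (∑ y' ∈ T,
          ind ((SimpleGraph.fromEdgeSet ((F ∩ E : Finset (Sym2 V)) : Set (Sym2 V))).Reachable u x ∧
            (SimpleGraph.fromEdgeSet ((F ∩ E : Finset (Sym2 V)) : Set (Sym2 V))).Reachable y' v))
          ≤ ∑ x' ∈ T, ∑ y' ∈ T,
          ind ((SimpleGraph.fromEdgeSet ((F ∩ E : Finset (Sym2 V)) : Set (Sym2 V))).Reachable u x' ∧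
            (SimpleGraph.fromEdgeSet ((F ∩ E : Finset (Sym2 V)) : Set (Sym2 V))).Reachable y' v) :=
        Finset.single_le_sum (f := fun x' => ∑ y' ∈ T,
          ind ((SimpleGraph.fromEdgeSet ((F ∩ E : Finset (Sym2 V)) : Set (Sym2 V))).Reachable u x' ∧
            (SimpleGraph.fromEdgeSet ((F ∩ E : Finset (Sym2 V)) : Set (Sym2 V))).Reachable y' v))
          (fun _ _ => Finset.sum_nonneg fun _ _ => ind_nonneg _) hxT
      have h3 := ind_nonneg
        ((SimpleGraph.fromEdgeSet ((F ∩ E : Finset (Sym2 V)) : Set (Sym2 V))).Reachable u v)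
      linarith
  · rw [ind_of_not hR]
    have h3 := ind_nonneg
      ((SimpleGraph.fromEdgeSet ((F ∩ E : Finset (Sym2 V)) : Set (Sym2 V))).Reachable u v)
    have : (0:ℝ) ≤ ∑ x ∈ T, ∑ y ∈ T,
        ind ((SimpleGraph.fromEdgeSet ((F ∩ E : Finset (Sym2 V)) : Set (Sym2 V))).Reachable u x ∧
          (SimpleGraph.fromEdgeSet ((F ∩ E : Finset (Sym2 V)) : Set (Sym2 V))).Reachable y v) :=
      Finset.sum_nonneg fun _ _ => Finset.sum_nonneg fun _ _ => ind_nonneg _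
    linarith

lemma broadcast_le_prox (E : Finset (Sym2 V)) (α : ℝ) {u v : V} (huv : u ≠ v) :
    broadcast E α ≤ prox E α u v := by
  unfold broadcast
  exact ciInf_le (Set.Finite.bddBelow (Set.finite_range _)) (⟨(u, v), huv⟩ : {p : V × V // p.1 ≠ p.2})

lemma broadcast_nonneg {α : ℝ} (hα0 : 0 ≤ α) (hα1 : α ≤ 1) (E : Finset (Sym2 V)) :
    0 ≤ broadcast E α := by
  rcases isEmpty_or_nonempty {p : V × V // p.1 ≠ p.2} with h | h
  · rw [broadcast, Real.iInf_of_isEmpty]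
  · rw [broadcast]
    exact le_ciInf fun p => prox_nonneg hα0 hα1 E _ _

lemma broadcast_le_one {α : ℝ} (hα0 : 0 ≤ α) (hα1 : α ≤ 1) (E : Finset (Sym2 V)) :
    broadcast E α ≤ 1 := by
  rcases isEmpty_or_nonempty {p : V × V // p.1 ≠ p.2} with h | h
  · rw [broadcast, Real.iInf_of_isEmpty]; exact zero_le_one
  · rw [broadcast]
    exact le_trans (ciInf_le (Set.Finite.bddBelow (Set.finite_range _)) h.some)
      (prox_le_one hα0 hα1 E _ _)

noncomputable def endpts (e : Sym2 V) : Finset V := {e.out.1, e.out.2}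

lemma mem_endpts {e : Sym2 V} {x : V} (h : x ∈ e) : x ∈ endpts e := by
  have heq : s(e.out.1, e.out.2) = e := e.out_eq
  rw [← heq] at h
  rcases Sym2.mem_iff.1 h with h1 | h1 <;> simp [endpts, h1]

lemma card_endpts (e : Sym2 V) : (endpts e).card ≤ 2 := by
  rw [endpts]
  exact (Finset.card_insert_le _ _).trans (by simp)

set_option maxHeartbeats 1000000 in
/-- constant-witness existence (part ii). -/
theorem constant_witness_existence_ii
    (E : Finset (Sym2 V)) (α : ℝ) (hα0 : 0 ≤ α) (hα1 : α ≤ 1) (k : ℕ) :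
    ∃ S : Finset (Sym2 V), (∀ e ∈ S, e ∉ E) ∧ S.card ≤ Nat.choose (2 * k) 2 ∧
      ∀ u v : V, ∃ W ⊆ S, W.card ≤ 2 ∧
        optBroadcast E α k * α / (12 * (k : ℝ) ^ 2 + 3) ≤ prox (E ∪ W) α u v := by
  haveI hne : Nonempty {F : Finset (Sym2 V) // F.card ≤ k ∧ ∀ e ∈ F, e ∉ E} :=
    ⟨⟨∅, by simp⟩⟩
  obtain ⟨F0s, hF0⟩ := exists_eq_ciSup_of_finite
    (f := fun F : {F : Finset (Sym2 V) // F.card ≤ k ∧ ∀ e ∈ F, e ∉ E} => broadcast (E ∪ F.1) α)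
  set β := optBroadcast E α k with hβdef
  have hβeq : broadcast (E ∪ F0s.1) α = β := hF0
  set F0 := F0s.1 with hF0def
  have hF0card : F0.card ≤ k := F0s.2.1
  have hF0E : ∀ e ∈ F0, e ∉ E := F0s.2.2
  have hdisj : Disjoint F0 E := Finset.disjoint_left.2 fun {e} he => hF0E e he
  set T := F0.biUnion endpts with hTdef
  have hT : ∀ e ∈ F0, ∀ x, x ∈ e → x ∈ T :=
    fun e he x hx => Finset.mem_biUnion.2 ⟨e, he, mem_endpts hx⟩
  have hTcard : T.card ≤ 2 * k := by
    calc T.card ≤ ∑ e ∈ F0, (endpts e).card := Finset.card_biUnion_le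
      _ ≤ ∑ _e ∈ F0, 2 := Finset.sum_le_sum fun e _ => card_endpts e
      _ = 2 * F0.card := by rw [Finset.sum_const, smul_eq_mul, mul_comm]
      _ ≤ 2 * k := by omega
  set S := (T.offDiag.image (Function.uncurry Sym2.mk)).filter (fun e => e ∉ E) with hSdef
  have hScard : S.card ≤ Nat.choose (2 * k) 2 := by
    calc S.card ≤ (T.offDiag.image (Function.uncurry Sym2.mk)).card := Finset.card_filter_le _ _
      _ = T.card.choose 2 := Sym2.card_image_offDiag T
      _ ≤ Nat.choose (2 * k) 2 := Nat.choose_le_choose 2 hTcard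
  -- basic bounds on β
  have hβ0 : 0 ≤ β := hβeq ▸ broadcast_nonneg hα0 hα1 (E ∪ F0)
  have hβ1 : β ≤ 1 := hβeq ▸ broadcast_le_one hα0 hα1 (E ∪ F0)
  set m : ℝ := 4 * (k : ℝ) ^ 2 + 1 with hmdef
  have hm0 : (0 : ℝ) < m := by positivity
  have hden : (12 * (k : ℝ) ^ 2 + 3) = 3 * m := by rw [hmdef]; ring
  refine ⟨S, fun e he => (Finset.mem_filter.1 he).2, hScard, fun u v => ?_⟩
  by_cases huv : u = v
  · subst huv
    refine ⟨∅, Finset.empty_subset _, by simp, ?_⟩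
    rw [Finset.union_empty, prox_self, hden]
    rw [div_le_one (by positivity)]
    nlinarith
  · -- u ≠ v
    have hβle : β ≤ prox (E ∪ F0) α u v := by
      rw [← hβeq]
      exact broadcast_le_prox _ _ huv
    have hdec := decomp hα0 hα1 E F0 hdisj T hT u v
    have hmain : β / m ≤ prox E α u v ∨ ∃ x ∈ T, ∃ y ∈ T, β / m ≤ q E α u v x y := by
      by_contra hcon
      push_neg at hcon
      obtain ⟨h1, h2⟩ := hcon
      have hsum : ∑ x ∈ T, ∑ y ∈ T, q E α u v x y ≤ (T.card : ℝ) * ((T.card : ℝ) * (β / m)) := by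
        calc ∑ x ∈ T, ∑ y ∈ T, q E α u v x y
            ≤ ∑ _x ∈ T, ((T.card : ℝ) * (β / m)) := by
              refine Finset.sum_le_sum fun x hx => ?_
              calc ∑ y ∈ T, q E α u v x y ≤ ∑ _y ∈ T, (β / m) :=
                    Finset.sum_le_sum fun y hy => le_of_lt (h2 x hx y hy)
                _ = (T.card : ℝ) * (β / m) := by rw [Finset.sum_const, nsmul_eq_mul]
          _ = (T.card : ℝ) * ((T.card : ℝ) * (β / m)) := by rw [Finset.sum_const, nsmul_eq_mul]
      have hTk : (T.card : ℝ) ≤ 2 * (k : ℝ) := by exact_mod_cast hTcard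
      have hβm : 0 ≤ β / m := div_nonneg hβ0 (le_of_lt hm0)
      have hT0 : (0 : ℝ) ≤ (T.card : ℝ) := Nat.cast_nonneg _
      have hsum2 : ∑ x ∈ T, ∑ y ∈ T, q E α u v x y ≤ 4 * (k : ℝ) ^ 2 * (β / m) := by
        calc ∑ x ∈ T, ∑ y ∈ T, q E α u v x y ≤ (T.card : ℝ) * ((T.card : ℝ) * (β / m)) := hsum
          _ ≤ 4 * (k : ℝ) ^ 2 * (β / m) := by
              have h4 : (T.card : ℝ) * (T.card : ℝ) ≤ 4 * (k : ℝ) ^ 2 := by nlinarith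
              nlinarith [mul_le_mul_of_nonneg_right h4 hβm]
      have : β < β := by
        calc β ≤ prox (E ∪ F0) α u v := hβle
          _ ≤ prox E α u v + ∑ x ∈ T, ∑ y ∈ T, q E α u v x y := hdec
          _ < β / m + 4 * (k : ℝ) ^ 2 * (β / m) := by linarith
          _ = β := by
              rw [hmdef]
              field_simp
              ring
      exact lt_irrefl _ this
    rcases hmain with hA | ⟨x, hxT, y, hyT, hB⟩
    · refine ⟨∅, Finset.empty_subset _, by simp, ?_⟩
      rw [Finset.union_empty, hden]
      calc β * α / (3 * m) ≤ β / m := by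
            rw [div_le_div_iff₀ (by positivity) hm0]
            nlinarith [mul_nonneg (mul_nonneg hβ0 (sub_nonneg.2 hα1)) (le_of_lt hm0),
              mul_nonneg hβ0 (le_of_lt hm0)]
        _ ≤ prox E α u v := hA
    · by_cases hxy : x = y
      · subst hxy
        refine ⟨∅, Finset.empty_subset _, by simp, ?_⟩
        rw [Finset.union_empty, hden]
        calc β * α / (3 * m) ≤ β / m := by
              rw [div_le_div_iff₀ (by positivity) hm0]
              nlinarith [mul_nonneg (mul_nonneg hβ0 (sub_nonneg.2 hα1)) (le_of_lt hm0),
                mul_nonneg hβ0 (le_of_lt hm0)]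
          _ ≤ q E α u v x x := hB
          _ ≤ prox E α u v := case_eq hα0 hα1 E u v x
      · by_cases heE : s(x, y) ∈ E
        · refine ⟨∅, Finset.empty_subset _, by simp, ?_⟩
          rw [Finset.union_empty, hden]
          calc β * α / (3 * m) ≤ α * (β / m) := by
                rw [div_le_iff₀ (by positivity)]
                have : α * (β / m) * (3 * m) = 3 * (α * β) := by field_simp
                nlinarith [mul_nonneg hα0 hβ0]
            _ ≤ α * q E α u v x y := by
                have := mul_le_mul_of_nonneg_left hB hα0
                linarith
            _ ≤ prox E α u v := case_in hα0 hα1 hxy heE u v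
        · refine ⟨{s(x, y)}, ?_, by simp, ?_⟩
          · rw [Finset.singleton_subset_iff, hSdef, Finset.mem_filter]
            exact ⟨Finset.mem_image.2 ⟨(x, y), Finset.mem_offDiag.2 ⟨hxT, hyT, hxy⟩, rfl⟩, heE⟩
          · have hus : E ∪ {s(x, y)} = insert s(x, y) E := by
              ext a; simp [Finset.mem_union, Finset.mem_insert, or_comm]
            rw [hus, hden]
            calc β * α / (3 * m) ≤ α * (β / m) := by
                  rw [div_le_iff₀ (by positivity)]
                  have : α * (β / m) * (3 * m) = 3 * (α * β) := by field_simp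
                  nlinarith [mul_nonneg hα0 hβ0]
              _ ≤ α * q E α u v x y := by
                  have := mul_le_mul_of_nonneg_left hB hα0
                  linarith
              _ ≤ prox (insert s(x, y) E) α u v := case_out hα0 hα1 E hxy heE u v
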